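/- For all n ≥ 4, the polynomial R_n(x) = Σ_{k=1}^{n-1} R(n,k) x^k is divisible by (x+1)^m, where m = ⌊(n−2)/2⌋. -/

import Mathlib

open Finset

/-- The value of the permutation `p` at (0-indexed) position `i`, as a natural number. -/
def permVal (n : ℕ) (p : Equiv.Perm (Fin n)) (i : ℕ) : ℕ :=
  if h : i < n then (p ⟨i, h⟩ : ℕ) else 0

/-- `p` changes direction at 0-indexed interior position `i` (peak or valley). -/
def dirChange (n : ℕ) (p : Equiv.Perm (Fin n)) (i : ℕ) : Prop :=
  (permVal n p (i-1) < permVal n p i ∧ permVal n p (i+1) < permVal n p i) ∨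
  (permVal n p i < permVal n p (i-1) ∧ permVal n p i < permVal n p (i+1))

instance (n : ℕ) (p : Equiv.Perm (Fin n)) : DecidablePred (dirChange n p) := fun i => by
  unfold dirChange; infer_instance

/-- Number of runs of a permutation: one more than the number of interior direction changes. -/
def numRuns (n : ℕ) (p : Equiv.Perm (Fin n)) : ℕ :=
  ((Finset.Ico 1 (n-1)).filter (dirChange n p)).card + 1

/-- `R n k` is the number of permutations of `{1,...,n}` with exactly `k` runs. -/
def R (n k : ℕ) : ℕ :=
  (Finset.univ.filter (fun p : Equiv.Perm (Fin n) => numRuns n p = k)).card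

/-- Number of descents of a permutation. -/
def numDescents (n : ℕ) (p : Equiv.Perm (Fin n)) : ℕ :=
  ((Finset.range (n-1)).filter (fun i => permVal n p (i+1) < permVal n p i)).card

/-- `A n k`: Eulerian numbers, counting permutations with `k` descents. -/
def A (n k : ℕ) : ℕ :=
  (Finset.univ.filter (fun p : Equiv.Perm (Fin n) => numDescents n p = k)).card

/-- The run-generating polynomial `R_n(x) = Σ_k R(n,k) x^k`. -/
noncomputable def Rpoly (n : ℕ) : Polynomial ℤ :=
  ∑ k ∈ Finset.range n, Polynomial.C ((R n k : ℤ)) * Polynomial.X ^ k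

/-- `p` is `j`-half-ascending: `p_{n+1-2i} < p_{n+2-2i}` (1-indexed) for all `1 ≤ i ≤ j`. -/
def HalfAscJ (n j : ℕ) (p : Equiv.Perm (Fin n)) : Prop :=
  ∀ i ∈ Finset.Icc 1 j, permVal n p (n - 2*i) < permVal n p (n + 1 - 2*i)

instance (n j : ℕ) : DecidablePred (HalfAscJ n j) := fun p => by
  unfold HalfAscJ; infer_instance

/-- For `n` even: `p` is half-ascending if `p_{2i-1} < p_{2i}` (1-indexed) for `1 ≤ i ≤ n/2`. -/
def HalfAsc (n : ℕ) (p : Equiv.Perm (Fin n)) : Prop :=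
  ∀ i ∈ Finset.range (n/2), permVal n p (2*i) < permVal n p (2*i+1)

instance (n : ℕ) : DecidablePred (HalfAsc n) := fun p => by
  unfold HalfAsc; infer_instance

/-- `U n k`: number of half-ascending permutations with exactly `k` descents. -/
def U (n k : ℕ) : ℕ :=
  (Finset.univ.filter (fun p : Equiv.Perm (Fin n) =>
    HalfAsc n p ∧ numDescents n p = k)).card

/-- Number of runs of the prefix `p_1, ..., p_L` (1-indexed). -/
def prefixRuns (n L : ℕ) (p : Equiv.Perm (Fin n)) : ℕ :=
  ((Finset.Ico 1 (L-1)).filter (dirChange n p)).card + 1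

/-- Number of descents of the suffix starting at 0-indexed position `a`. -/
def suffixDescents (n a : ℕ) (p : Equiv.Perm (Fin n)) : ℕ :=
  ((Finset.Ico a (n-1)).filter (fun i => permVal n p (i+1) < permVal n p i)).card

/-- `t_j(p) = r_j(p) + s_j(p)`: runs of the prefix `p_1..p_{n-2j}` plus descents of the
suffix `p_{n-2j}..p_n`. -/
def tstat (n j : ℕ) (p : Equiv.Perm (Fin n)) : ℕ :=
  prefixRuns n (n - 2*j) p + suffixDescents n (n - 2*j - 1) p

/-- `R_{n,j}(x) = Σ_p x^{t_j(p)}` over `j`-half-ascending permutations `p`. -/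
noncomputable def RpolyJ (n j : ℕ) : Polynomial ℤ :=
  ∑ p ∈ Finset.univ.filter (HalfAscJ n j), Polynomial.X ^ (tstat n j p)

/-- A labeled northeastern lattice path with `n` edges, encoded as a function assigning to the
`i`-th edge (0-indexed; the paper's edge `a_{i+1}`) a direction (`true` = vertical) and a label.
Conditions (1)-(3) of the paper. -/
def IsLPath (n : ℕ) (f : Fin n → Bool × ℕ) : Prop :=
  (∀ i : Fin n, 1 ≤ (f i).2) ∧
  (∀ h : 0 < n, (f ⟨0, h⟩).1 = false ∧ (f ⟨0, h⟩).2 = 1) ∧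
  (∀ i : ℕ, (h : i + 1 < n) →
    ((f ⟨i, Nat.lt_of_succ_lt h⟩).1 = (f ⟨i+1, h⟩).1 →
      (f ⟨i+1, h⟩).2 ≤ (f ⟨i, Nat.lt_of_succ_lt h⟩).2) ∧
    ((f ⟨i, Nat.lt_of_succ_lt h⟩).1 ≠ (f ⟨i+1, h⟩).1 →
      (f ⟨i, Nat.lt_of_succ_lt h⟩).2 + (f ⟨i+1, h⟩).2 ≤ i + 2))

/-- The number of vertical edges of a labeled lattice path. -/
def vertCount (n : ℕ) (f : Fin n → Bool × ℕ) : ℕ :=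
  (Finset.univ.filter (fun i : Fin n => (f i).1 = true)).card



section Aux

def cnt (A : ℕ → Bool) (m : ℕ) : ℕ := ∑ i ∈ Finset.range m, (A i != A (i+1)).toNat

def dlt (A : ℕ → Bool) (m a : ℕ) : ℕ :=
  if a = 0 then (A 0).toNat
  else if a = 1 then (if A 0 then 2*(A 1).toNat else 1)
  else if a ≤ m+2 then (if A (a-1) then 2*(A a).toNat else 2*(!A (a-2)).toNat)
  else if a = m+3 then (if A (m+2) then 1 else 2*(!A (m+1)).toNat)
  else (!A (m+2)).toNat

lemma toNat_le_one (b : Bool) : b.toNat ≤ 1 := by cases b <;> simp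

lemma dlt_le_two (A : ℕ → Bool) (m a : ℕ) : dlt A m a ≤ 2 := by
  unfold dlt
  split_ifs <;>
    first
    | exact le_trans (toNat_le_one _) (by norm_num)
    | exact le_trans (Nat.mul_le_mul_left 2 (toNat_le_one _)) (by norm_num)
    | norm_num

lemma dlt_eq_one_iff (A : ℕ → Bool) (m a : ℕ) (ha : a ≤ m + 4) :
    dlt A m a = 1 ↔ (a = if A 0 then 0 else 1) ∨ (a = if A (m+2) then m+3 else m+4) := by
  unfold dlt
  rcases Nat.lt_or_ge a 2 with h2 | h2
  · interval_cases a <;>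
      cases h0 : A 0 <;> cases hm : A (m+2) <;> cases h1 : A 1 <;>
        simp [h0, hm, h1] <;> omega
  · have ha0 : ¬ a = 0 := by omega
    have ha1 : ¬ a = 1 := by omega
    rcases Nat.lt_or_ge a (m+3) with h3 | h3
    · have : a ≤ m + 2 := by omega
      simp only [ha0, ha1, this, if_false, if_true, if_neg, if_pos]
      cases h0 : A 0 <;> cases hm : A (m+2) <;> cases hl : A (a-1) <;>
        cases hc : A a <;> cases hd : A (a-2) <;> simp [h0, hm, hl, hc, hd] <;> omega
    · rcases Nat.eq_or_lt_of_le h3 with h4 | h4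
      · have hle : ¬ a ≤ m+2 := by omega
        simp only [ha0, ha1, hle, ← h4, if_false, if_true, if_neg, if_pos]
        cases h0 : A 0 <;> cases hm : A (m+2) <;> cases hl : A (m+1) <;>
          simp [h0, hm, hl] <;> omega
      · have hle : ¬ a ≤ m+2 := by omega
        have hne : ¬ a = m+3 := by omega
        have : a = m+4 := by omega
        simp only [ha0, ha1, hle, hne, if_false, this]
        cases h0 : A 0 <;> cases hm : A (m+2) <;> simp [h0, hm] <;> omega

lemma dlt_sum (A : ℕ → Bool) (m : ℕ) :
    ∑ a ∈ Finset.range (m+5), dlt A m a + 2 * cnt A (m+2) = 2*(m+3) := by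
  have hs : ∑ a ∈ Finset.range (m+5), dlt A m a
      = dlt A m 0 + dlt A m 1 + (∑ i ∈ Finset.range (m+1), dlt A m (i+2))
        + dlt A m (m+3) + dlt A m (m+4) := by
    rw [Finset.sum_range_succ, Finset.sum_range_succ, Finset.sum_range_succ',
      Finset.sum_range_succ']
    simp only [show ∀ x:ℕ, x+1+1 = x+2 from fun x => rfl]
    ring
  have f5 : ∀ i ∈ Finset.range (m+1), dlt A m (i+2)
      = 2*((A (i+1) && A (i+2)).toNat + (!A i && !A (i+1)).toNat) := by
    intro i hi
    simp only [Finset.mem_range] at hi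
    unfold dlt
    have h0 : ¬ (i+2 = 0) := by omega
    have h1 : ¬ (i+2 = 1) := by omega
    have h2 : i+2 ≤ m+2 := by omega
    simp only [h0, h1, h2, if_false, if_true, if_pos]
    have e1 : i + 2 - 1 = i + 1 := by omega
    have e2 : i + 2 - 2 = i := by omega
    rw [e1, e2]
    cases A i <;> cases A (i+1) <;> cases A (i+2) <;> simp
  rw [Finset.sum_congr rfl f5, ← Finset.mul_sum, Finset.sum_add_distrib] at hs
  have f1 : (∑ i ∈ Finset.range (m+1), (A (i+1) && A (i+2)).toNat) + (A 0 && A 1).toNat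
      = ∑ i ∈ Finset.range (m+2), (A i && A (i+1)).toNat := by
    rw [eq_comm, Finset.sum_range_succ']
  have f2 : (∑ i ∈ Finset.range (m+1), (!A i && !A (i+1)).toNat) + (!A (m+1) && !A (m+2)).toNat
      = ∑ i ∈ Finset.range (m+2), (!A i && !A (i+1)).toNat := by
    rw [eq_comm, Finset.sum_range_succ]
  have fUVC : (∑ i ∈ Finset.range (m+2), (A i && A (i+1)).toNat)
      + (∑ i ∈ Finset.range (m+2), (!A i && !A (i+1)).toNat) + cnt A (m+2) = m+2 := by
    unfold cnt
    rw [← Finset.sum_add_distrib, ← Finset.sum_add_distrib]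
    have : ∀ i ∈ Finset.range (m+2),
        (A i && A (i+1)).toNat + (!A i && !A (i+1)).toNat + (A i != A (i+1)).toNat = 1 := by
      intro i _; cases A i <;> cases A (i+1) <;> simp
    rw [Finset.sum_congr rfl this, Finset.sum_const, smul_eq_mul, mul_one, Finset.card_range]
  have f3 : dlt A m 0 + dlt A m 1 = 1 + 2*(A 0 && A 1).toNat := by
    unfold dlt; cases h0 : A 0 <;> cases h1 : A 1 <;> simp [h0, h1]
  have f4 : dlt A m (m+3) + dlt A m (m+4) = 1 + 2*(!A (m+1) && !A (m+2)).toNat := by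
    unfold dlt
    have h0 : ¬ (m+3 = 0) := by omega
    have h1 : ¬ (m+3 = 1) := by omega
    have h2 : ¬ (m+3 ≤ m+2) := by omega
    have h0' : ¬ (m+4 = 0) := by omega
    have h1' : ¬ (m+4 = 1) := by omega
    have h2' : ¬ (m+4 ≤ m+2) := by omega
    have h3' : ¬ (m+4 = m+3) := by omega
    simp only [h0, h1, h2, h0', h1', h2', h3', if_false, if_true, if_pos]
    cases hx : A (m+1) <;> cases hy : A (m+2) <;> simp [hx, hy]
  omega

lemma cnt_insert (A A' : ℕ → Bool) (m a : ℕ) (ha : a ≤ m + 4)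
    (h1 : ∀ i, i + 2 ≤ a → A' i = A i)
    (h2 : 1 ≤ a → A' (a-1) = true)
    (h3 : a ≤ m+3 → A' a = false)
    (h4 : ∀ i, a + 1 ≤ i → A' i = A (i-1)) :
    cnt A' (m+3) = cnt A (m+2) + dlt A m a := by
  unfold cnt
  by_cases ha0 : a = 0
  · subst ha0
    rw [Finset.sum_range_succ']
    have e0 : (A' 0 != A' (0+1)).toNat = (A 0).toNat := by
      rw [h3 (by omega), h4 1 (by omega)]; simp
    have ec : ∀ i ∈ Finset.range (m+2), (A' (i+1) != A' (i+1+1)).toNat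
        = (A i != A (i+1)).toNat := by
      intro i _
      rw [h4 (i+1) (by omega), h4 (i+1+1) (by omega)]
      simp
    rw [e0, Finset.sum_congr rfl ec]
    simp [dlt, Nat.add_comm]
  by_cases ha1 : a = 1
  · subst ha1
    rw [Finset.sum_range_succ', Finset.sum_range_succ']
    have e0 : (A' 0 != A' (0+1)).toNat = 1 := by
      have := h2 (by omega); simp at this
      rw [this, h3 (by omega)]; simp
    have e1 : (A' (0+1) != A' (0+1+1)).toNat = (A 1).toNat := by
      rw [h3 (by omega), h4 2 (by omega)]; simp
    have ec : ∀ i ∈ Finset.range (m+1), (A' (i+1+1) != A' (i+1+1+1)).toNat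
        = (A (i+1) != A (i+1+1)).toNat := by
      intro i _
      rw [h4 (i+1+1) (by omega), h4 (i+1+1+1) (by omega)]
      simp [show ∀ x:ℕ, x+1+1-1 = x+1 from fun x => rfl]
    rw [e0, e1, Finset.sum_congr rfl ec,
      show ∑ i ∈ Finset.range (m+2), (A i != A (i+1)).toNat
        = ∑ i ∈ Finset.range (m+1), (A (i+1) != A (i+1+1)).toNat + (A 0 != A (0+1)).toNat
        from Finset.sum_range_succ' _ _]
    simp only [dlt, if_true, if_false, Nat.zero_add]
    norm_num
    cases h0 : A 0 <;> cases hh1 : A 1 <;> simp [h0, hh1] <;> omega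
  by_cases ham : a ≤ m + 2
  · -- interior: a = b+2, b ≤ m
    obtain ⟨b, rfl⟩ : ∃ b, a = b + 2 := ⟨a - 2, by omega⟩
    obtain ⟨t, rfl⟩ : ∃ t, m = b + t := ⟨m - b, by omega⟩
    -- split sums at b
    have split : ∀ (B : ℕ → Bool) (r : ℕ),
        ∑ i ∈ Finset.range (b + r), (B i != B (i+1)).toNat
        = ∑ i ∈ Finset.range b, (B i != B (i+1)).toNat
          + ∑ i ∈ Finset.range r, (B (b+i) != B (b+i+1)).toNat := by
      intro B r
      rw [← Finset.sum_range_add_sum_Ico _ (Nat.le_add_right b r),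
        Finset.sum_Ico_eq_sum_range]
      simp [Nat.add_sub_cancel_left]
    rw [show b + t + 3 = b + (t+3) from by omega, show b + t + 2 = b + (t+2) from by omega,
      split A' (t+3), split A (t+2)]
    have epre : ∀ i ∈ Finset.range b, (A' i != A' (i+1)).toNat = (A i != A (i+1)).toNat := by
      intro i hi
      simp only [Finset.mem_range] at hi
      rw [h1 i (by omega), h1 (i+1) (by omega)]
    rw [Finset.sum_congr rfl epre]
    -- peel three terms from front of the A' block, two from A block
    rw [Finset.sum_range_succ', Finset.sum_range_succ', Finset.sum_range_succ']
    rw [show ∑ i ∈ Finset.range (t+2), (A (b+i) != A (b+i+1)).toNat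
        = ∑ i ∈ Finset.range (t+1), (A (b+(i+1)) != A (b+(i+1)+1)).toNat
          + (A (b+0) != A (b+0+1)).toNat from Finset.sum_range_succ' _ _,
      show ∑ i ∈ Finset.range (t+1), (A (b+(i+1)) != A (b+(i+1)+1)).toNat
        = ∑ i ∈ Finset.range t, (A (b+(i+1+1)) != A (b+(i+1+1)+1)).toNat
          + (A (b+(0+1)) != A (b+(0+1)+1)).toNat from Finset.sum_range_succ' _ _]
    have g0 : (A' (b+0) != A' (b+0+1)).toNat = (!A b).toNat := by
      simp only [Nat.add_zero]
      rw [h1 b (by omega), show b+0+1 = (b+2)-1 from by omega, h2 (by omega)]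
      simp
    have g1 : (A' (b+(0+1)) != A' (b+(0+1)+1)).toNat = 1 := by
      have e2 : A' (b+1) = true := by
        rw [show b+1 = (b+2)-1 from by omega]; exact h2 (by omega)
      have e3 : A' (b+2) = false := h3 (by omega)
      rw [show b+(0+1) = b+1 from by omega, show b+1+1 = b+2 from by omega, e2, e3]
      simp
    have g2 : (A' (b+(0+1+1)) != A' (b+(0+1+1)+1)).toNat = (A (b+2)).toNat := by
      rw [show b+(0+1+1) = b+2 from by omega, h3 (by omega),
        h4 (b+2+1) (by omega)]
      simp [show b+2+1-1 = b+2 from by omega]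
    have gc : ∀ i ∈ Finset.range t, (A' (b+(i+1+1+1)) != A' (b+(i+1+1+1)+1)).toNat
        = (A (b+(i+1+1)) != A (b+(i+1+1)+1)).toNat := by
      intro i _
      rw [h4 (b+(i+1+1+1)) (by omega), h4 (b+(i+1+1+1)+1) (by omega)]
      congr 2 <;> · congr 1; omega
    rw [g0, g1, g2, Finset.sum_congr rfl gc]
    have edlt : dlt A (b+t) (b+2)
        = if A (b+1) then 2*(A (b+2)).toNat else 2*(!A b).toNat := by
      unfold dlt
      have : ¬ (b+2 = 0) := by omega
      have : ¬ (b+2 = 1) := by omega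
      simp only [show ¬ (b+2 = 0) from by omega, show ¬ (b+2 = 1) from by omega,
        show b+2 ≤ b+t+2 from by omega, if_false, if_true, if_pos]
      simp [show b+2-1 = b+1 from by omega, show b+2-2 = b from by omega]
    rw [edlt]
    have e01 : b + 0 + 1 = b + 1 := by omega
    have e11 : b + (0+1) = b + 1 := by omega
    have e111 : b + (0+1) + 1 = b + 2 := by omega
    rw [show b+0 = b from by omega, e01, e11, e111]
    cases hb : A b <;> cases hb1 : A (b+1) <;> cases hb2 : A (b+2) <;>
      simp [hb, hb1, hb2] <;> omega
  by_cases ha3 : a = m + 3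
  · subst ha3
    rw [Finset.sum_range_succ, Finset.sum_range_succ,
      show ∑ i ∈ Finset.range (m+2), (A i != A (i+1)).toNat
        = ∑ i ∈ Finset.range (m+1), (A i != A (i+1)).toNat
          + (A (m+1) != A (m+1+1)).toNat from Finset.sum_range_succ _ _]
    have ec : ∀ i ∈ Finset.range (m+1), (A' i != A' (i+1)).toNat
        = (A i != A (i+1)).toNat := by
      intro i hi
      simp only [Finset.mem_range] at hi
      rw [h1 i (by omega), h1 (i+1) (by omega)]
    have e1 : (A' (m+1) != A' (m+1+1)).toNat = (!A (m+1)).toNat := by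
      rw [h1 (m+1) (by omega), show m+1+1 = (m+3)-1 from by omega, h2 (by omega)]
      simp
    have e2 : (A' (m+2) != A' (m+2+1)).toNat = 1 := by
      rw [show m+2 = (m+3)-1 from by omega, h2 (by omega),
        show (m+3)-1+1 = m+3 from by omega, h3 (by omega)]
      simp
    rw [Finset.sum_congr rfl ec, e1, e2]
    have edlt : dlt A m (m+3) = if A (m+2) then 1 else 2*(!A (m+1)).toNat := by
      unfold dlt
      simp only [show ¬ (m+3 = 0) from by omega, show ¬ (m+3 = 1) from by omega,
        show ¬ (m+3 ≤ m+2) from by omega, if_false, if_true, if_pos]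
    rw [edlt]
    cases hx : A (m+1) <;> cases hy : A (m+2) <;> simp [hx, hy] <;> omega
  · -- a = m+4
    have ha4 : a = m + 4 := by omega
    subst ha4
    rw [Finset.sum_range_succ]
    have ec : ∀ i ∈ Finset.range (m+2), (A' i != A' (i+1)).toNat
        = (A i != A (i+1)).toNat := by
      intro i hi
      simp only [Finset.mem_range] at hi
      rw [h1 i (by omega), h1 (i+1) (by omega)]
    have e1 : (A' (m+2) != A' (m+2+1)).toNat = (!A (m+2)).toNat := by
      rw [h1 (m+2) (by omega), show m+2+1 = (m+4)-1 from by omega, h2 (by omega)]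
      simp
    rw [Finset.sum_congr rfl ec, e1]
    have edlt : dlt A m (m+4) = (!A (m+2)).toNat := by
      unfold dlt
      simp only [show ¬ (m+4 = 0) from by omega, show ¬ (m+4 = 1) from by omega,
        show ¬ (m+4 ≤ m+2) from by omega, show ¬ (m+4 = m+3) from by omega,
        if_false]
    rw [edlt]

lemma cnt_le (A : ℕ → Bool) (m : ℕ) : cnt A m ≤ m := by
  calc cnt A m ≤ ∑ _i ∈ Finset.range m, 1 :=
        Finset.sum_le_sum (fun i _ => by cases A i <;> cases A (i+1) <;> simp)
    _ = m := by simp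

lemma dlt_card_one (A : ℕ → Bool) (m : ℕ) :
    ((Finset.range (m+5)).filter (fun a => dlt A m a = 1)).card = 2 := by
  have : ((Finset.range (m+5)).filter (fun a => dlt A m a = 1))
      = {(if A 0 then 0 else 1), (if A (m+2) then m+3 else m+4)} := by
    ext a
    simp only [Finset.mem_filter, Finset.mem_range, Finset.mem_insert, Finset.mem_singleton]
    constructor
    · rintro ⟨h5, h1⟩
      exact (dlt_eq_one_iff A m a (by omega)).mp h1
    · intro h
      have ha : a ≤ m + 4 := by
        rcases h with h | h <;> subst h <;> split_ifs <;> omega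
      exact ⟨by omega, (dlt_eq_one_iff A m a ha).mpr h⟩
  rw [this]
  rw [Finset.card_insert_of_notMem (by
    simp only [Finset.mem_singleton]
    cases h0 : A 0 <;> cases hm : A (m+2) <;> simp [h0, hm] <;> omega)]
  rw [Finset.card_singleton]

lemma dlt_card_counts (A : ℕ → Bool) (m : ℕ) :
    ((Finset.range (m+5)).filter (fun a => dlt A m a = 0)).card = cnt A (m+2) + 1 ∧
    ((Finset.range (m+5)).filter (fun a => dlt A m a = 2)).card = m + 2 - cnt A (m+2) := by
  have d01 : Disjoint ((Finset.range (m+5)).filter (fun a => dlt A m a = 0))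
      ((Finset.range (m+5)).filter (fun a => dlt A m a = 1)) :=
    Finset.disjoint_left.mpr (fun a h1 h2 => by
      simp only [Finset.mem_filter] at h1 h2; omega)
  have d012 : Disjoint ((Finset.range (m+5)).filter (fun a => dlt A m a = 0)
        ∪ (Finset.range (m+5)).filter (fun a => dlt A m a = 1))
      ((Finset.range (m+5)).filter (fun a => dlt A m a = 2)) :=
    Finset.disjoint_left.mpr (fun a h1 h2 => by
      simp only [Finset.mem_union, Finset.mem_filter] at h1 h2
      rcases h1 with h1 | h1 <;> omega)
  have hU : ((Finset.range (m+5)).filter (fun a => dlt A m a = 0)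
        ∪ (Finset.range (m+5)).filter (fun a => dlt A m a = 1))
        ∪ (Finset.range (m+5)).filter (fun a => dlt A m a = 2) = Finset.range (m+5) := by
    ext a
    simp only [Finset.mem_union, Finset.mem_filter, Finset.mem_range]
    constructor
    · rintro ((h | h) | h) <;> exact h.1
    · intro h
      have := dlt_le_two A m a
      rcases Nat.lt_or_ge (dlt A m a) 1 with h' | h'
      · exact Or.inl (Or.inl ⟨h, by omega⟩)
      rcases Nat.lt_or_ge (dlt A m a) 2 with h'' | h''
      · exact Or.inl (Or.inr ⟨h, by omega⟩)
      · exact Or.inr ⟨h, by omega⟩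
  have hcard : ((Finset.range (m+5)).filter (fun a => dlt A m a = 0)).card
      + 2 + ((Finset.range (m+5)).filter (fun a => dlt A m a = 2)).card = m + 5 := by
    have := congrArg Finset.card hU
    rw [Finset.card_union_of_disjoint d012, Finset.card_union_of_disjoint d01,
      Finset.card_range, dlt_card_one A m] at this
    omega
  have hsum : 2 + 2 * ((Finset.range (m+5)).filter (fun a => dlt A m a = 2)).card
      + 2 * cnt A (m+2) = 2*(m+3) := by
    have e1 : ∑ a ∈ Finset.range (m+5), dlt A m a
        = ∑ a ∈ (Finset.range (m+5)).filter (fun a => dlt A m a = 0), dlt A m a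
          + ∑ a ∈ (Finset.range (m+5)).filter (fun a => dlt A m a = 1), dlt A m a
          + ∑ a ∈ (Finset.range (m+5)).filter (fun a => dlt A m a = 2), dlt A m a := by
      rw [← Finset.sum_union d01, ← Finset.sum_union d012, hU]
    have e2 : ∑ a ∈ (Finset.range (m+5)).filter (fun a => dlt A m a = 0), dlt A m a = 0 :=
      Finset.sum_eq_zero (fun a ha => by simp only [Finset.mem_filter] at ha; exact ha.2)
    have e3 : ∑ a ∈ (Finset.range (m+5)).filter (fun a => dlt A m a = 1), dlt A m a = 2 := by
      rw [Finset.sum_congr rfl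
        (fun a ha => by simp only [Finset.mem_filter] at ha; exact ha.2),
        Finset.sum_const, dlt_card_one A m]
      simp
    have e4 : ∑ a ∈ (Finset.range (m+5)).filter (fun a => dlt A m a = 2), dlt A m a
        = 2 * ((Finset.range (m+5)).filter (fun a => dlt A m a = 2)).card := by
      rw [Finset.sum_congr rfl
        (fun a ha => by simp only [Finset.mem_filter] at ha; exact ha.2),
        Finset.sum_const]
      ring
    have := dlt_sum A m
    omega
  have hle := cnt_le A (m+2)
  constructor <;> omega

lemma dlt_card_k (A : ℕ → Bool) (m j k : ℕ) (hj : j = cnt A (m+2) + 1) :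
    ((Finset.range (m+5)).filter (fun a => j + dlt A m a = k)).card
    = if k = j then j else if k = j+1 then 2 else if k = j+2 then m+3-j else 0 := by
  obtain ⟨hc0, hc2⟩ := dlt_card_counts A m
  by_cases h0 : k = j
  · rw [if_pos h0]
    rw [Finset.filter_congr (fun a _ => by constructor <;> intro h <;> omega :
      ∀ a ∈ Finset.range (m+5), (j + dlt A m a = k) ↔ (dlt A m a = 0))]
    rw [hc0, hj]
  rw [if_neg h0]
  by_cases h1 : k = j + 1
  · rw [if_pos h1]
    rw [Finset.filter_congr (fun a _ => by constructor <;> intro h <;> omega :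
      ∀ a ∈ Finset.range (m+5), (j + dlt A m a = k) ↔ (dlt A m a = 1))]
    exact dlt_card_one A m
  rw [if_neg h1]
  by_cases h2 : k = j + 2
  · rw [if_pos h2]
    rw [Finset.filter_congr (fun a _ => by constructor <;> intro h <;> omega :
      ∀ a ∈ Finset.range (m+5), (j + dlt A m a = k) ↔ (dlt A m a = 2))]
    omega
  · rw [if_neg h2]
    rw [Finset.filter_false_of_mem (fun a _ => by have := dlt_le_two A m a; omega)]
    simp

lemma permVal_lt (n : ℕ) (p : Equiv.Perm (Fin n)) (i : ℕ) (h : i < n) :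
    permVal n p i < n := by
  rw [permVal, dif_pos h]; exact (p ⟨i, h⟩).isLt

lemma permVal_zero (n : ℕ) (p : Equiv.Perm (Fin n)) (i : ℕ) (h : ¬ i < n) :
    permVal n p i = 0 := by rw [permVal, dif_neg h]

lemma permVal_ne (n : ℕ) (p : Equiv.Perm (Fin n)) (i j : ℕ) (hi : i < n) (hj : j < n)
    (hij : i ≠ j) : permVal n p i ≠ permVal n p j := by
  simp only [permVal]
  rw [dif_pos hi, dif_pos hj]
  intro h
  exact hij (congrArg Fin.val (p.injective (Fin.val_injective h)))

def insF (n : ℕ) (q : Equiv.Perm (Fin n)) (a : Fin (n+1)) : Fin (n+1) → Fin (n+1) :=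
  fun i => a.insertNth (α := fun _ => Fin (n+1)) (Fin.last n) (fun j => (q j).castSucc) i

lemma insF_inj (n : ℕ) (q : Equiv.Perm (Fin n)) (a : Fin (n+1)) :
    Function.Injective (insF n q a) := by
  intro x y h
  by_cases hx : x = a <;> by_cases hy : y = a
  · rw [hx, hy]
  · exfalso
    obtain ⟨j, rfl⟩ := Fin.exists_succAbove_eq hy
    rw [insF, insF, hx, Fin.insertNth_apply_same, Fin.insertNth_apply_succAbove] at h
    exact Fin.ne_last_of_lt (Fin.castSucc_lt_last (q j)) h.symm
  · exfalso
    obtain ⟨j, rfl⟩ := Fin.exists_succAbove_eq hx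
    rw [insF, insF, hy, Fin.insertNth_apply_same, Fin.insertNth_apply_succAbove] at h
    exact Fin.ne_last_of_lt (Fin.castSucc_lt_last (q j)) h
  · obtain ⟨j, rfl⟩ := Fin.exists_succAbove_eq hx
    obtain ⟨j', rfl⟩ := Fin.exists_succAbove_eq hy
    rw [insF, insF, Fin.insertNth_apply_succAbove, Fin.insertNth_apply_succAbove] at h
    rw [q.injective (Fin.castSucc_injective n h)]

noncomputable def insP (n : ℕ) (q : Equiv.Perm (Fin n)) (a : Fin (n+1)) : Equiv.Perm (Fin (n+1)) :=
  Equiv.ofBijective (insF n q a) ((Finite.injective_iff_bijective).mp (insF_inj n q a))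

lemma insP_apply_same (n : ℕ) (q : Equiv.Perm (Fin n)) (a : Fin (n+1)) :
    insP n q a a = Fin.last n := by
  show insF n q a a = _
  rw [insF, Fin.insertNth_apply_same]

lemma insP_apply_succAbove (n : ℕ) (q : Equiv.Perm (Fin n)) (a : Fin (n+1)) (j : Fin n) :
    insP n q a (a.succAbove j) = (q j).castSucc := by
  show insF n q a _ = _
  rw [insF, Fin.insertNth_apply_succAbove]

lemma permVal_insP_lt (n : ℕ) (q : Equiv.Perm (Fin n)) (a : Fin (n+1)) (i : ℕ)
    (hia : i < (a : ℕ)) : permVal (n+1) (insP n q a) i = permVal n q i := by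
  have hin : i < n := by have := a.isLt; omega
  have h1 : i < n + 1 := by omega
  rw [permVal, permVal, dif_pos h1, dif_pos hin]
  have : (⟨i, h1⟩ : Fin (n+1)) = a.succAbove ⟨i, hin⟩ := by
    rw [Fin.succAbove_of_castSucc_lt]
    · rfl
    · simpa [Fin.lt_def] using hia
  rw [this, insP_apply_succAbove]
  rfl

lemma permVal_insP_same (n : ℕ) (q : Equiv.Perm (Fin n)) (a : Fin (n+1)) :
    permVal (n+1) (insP n q a) (a : ℕ) = n := by
  have h1 : (a:ℕ) < n + 1 := a.isLt
  rw [permVal, dif_pos h1]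
  have : (⟨(a:ℕ), h1⟩ : Fin (n+1)) = a := rfl
  rw [this, insP_apply_same]
  rfl

lemma permVal_insP_gt (n : ℕ) (q : Equiv.Perm (Fin n)) (a : Fin (n+1)) (i : ℕ)
    (hia : (a:ℕ) < i) (hi : i < n + 1) :
    permVal (n+1) (insP n q a) i = permVal n q (i-1) := by
  have hin : i - 1 < n := by omega
  rw [permVal, permVal, dif_pos hi, dif_pos hin]
  have : (⟨i, hi⟩ : Fin (n+1)) = a.succAbove ⟨i-1, hin⟩ := by
    rw [Fin.succAbove_of_le_castSucc]
    · ext; simp; omega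
    · simp [Fin.le_def]; omega
  rw [this, insP_apply_succAbove]
  rfl

/-- The ascent word of a permutation. -/
def ascW (n : ℕ) (p : Equiv.Perm (Fin n)) (i : ℕ) : Bool :=
  decide (permVal n p i < permVal n p (i+1))

lemma numRuns_eq_cnt (m : ℕ) (p : Equiv.Perm (Fin (m+2))) :
    numRuns (m+2) p = cnt (ascW (m+2) p) m + 1 := by
  unfold numRuns cnt
  congr 1
  rw [Finset.card_filter]
  rw [show m+2-1 = m+1 from rfl]
  rw [Finset.sum_Ico_eq_sum_range]
  rw [show m+1-1 = m from rfl]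
  apply Finset.sum_congr rfl
  intro i hi
  simp only [Finset.mem_range] at hi
  have hab := permVal_ne (m+2) p i (i+1) (by omega) (by omega) (by omega)
  have hbc := permVal_ne (m+2) p (i+1) (i+2) (by omega) (by omega) (by omega)
  unfold ascW
  rcases Classical.em (dirChange (m+2) p (1+i)) with hd | hd
  · rw [if_pos hd]
    unfold dirChange at hd
    rw [show 1+i-1 = i from by omega, show 1+i+1 = i+2 from by omega,
      show 1+i = i+1 from by omega] at hd
    by_cases h1 : permVal (m+2) p i < permVal (m+2) p (i+1) <;>
      by_cases h2 : permVal (m+2) p (i+1) < permVal (m+2) p (i+2) <;>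
        simp [h1, h2] <;> omega
  · rw [if_neg hd]
    unfold dirChange at hd
    rw [show 1+i-1 = i from by omega, show 1+i+1 = i+2 from by omega,
      show 1+i = i+1 from by omega] at hd
    by_cases h1 : permVal (m+2) p i < permVal (m+2) p (i+1) <;>
      by_cases h2 : permVal (m+2) p (i+1) < permVal (m+2) p (i+2) <;>
        simp [h1, h2] <;> omega

lemma numRuns_le (m : ℕ) (p : Equiv.Perm (Fin (m+2))) : numRuns (m+2) p ≤ m + 1 := by
  rw [numRuns_eq_cnt]
  have := cnt_le (ascW (m+2) p) m
  omega

lemma numRuns_pos (n : ℕ) (p : Equiv.Perm (Fin n)) : 1 ≤ numRuns n p := by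
  unfold numRuns; omega

lemma R_zero (n : ℕ) : R n 0 = 0 := by
  unfold R
  rw [Finset.filter_false_of_mem, Finset.card_empty]
  intro p _
  have := numRuns_pos n p
  omega

lemma R_big (m k : ℕ) (hk : m + 2 ≤ k) : R (m+2) k = 0 := by
  unfold R
  rw [Finset.filter_false_of_mem, Finset.card_empty]
  intro p _
  have := numRuns_le m p
  omega

/-- the ascent word of the inserted permutation satisfies the `cnt_insert` hypotheses. -/
lemma numRuns_insP (m : ℕ) (q : Equiv.Perm (Fin (m+4))) (a : Fin (m+5)) :
    numRuns (m+5) (insP (m+4) q a) = numRuns (m+4) q + dlt (ascW (m+4) q) m (a : ℕ) := by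
  have ha : (a : ℕ) ≤ m + 4 := by have := a.isLt; omega
  have E1 : numRuns (m+5) (insP (m+4) q a) = cnt (ascW (m+5) (insP (m+4) q a)) (m+3) + 1 :=
    numRuns_eq_cnt (m+3) (insP (m+4) q a)
  have E2 : numRuns (m+4) q = cnt (ascW (m+4) q) (m+2) + 1 := numRuns_eq_cnt (m+2) q
  rw [E1, E2]
  rw [cnt_insert (ascW (m+4) q) (ascW (m+5) (insP (m+4) q a)) m (a:ℕ) ha]
  · ring
  · -- h1
    intro i hi
    unfold ascW
    rw [permVal_insP_lt _ _ _ _ (by omega), permVal_insP_lt _ _ _ _ (by omega)]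
  · -- h2
    intro h1
    unfold ascW
    rw [show (a:ℕ) - 1 + 1 = (a:ℕ) from by omega, permVal_insP_lt _ _ _ _ (by omega),
      permVal_insP_same]
    simp only [decide_eq_true_eq]
    exact permVal_lt _ _ _ (by omega)
  · -- h3
    intro h1
    unfold ascW
    rw [permVal_insP_same, permVal_insP_gt _ _ _ _ (by omega) (by omega)]
    simp only [decide_eq_false_iff_not, not_lt]
    have := permVal_lt (m+4) q ((a:ℕ)+1-1) (by omega)
    omega
  · -- h4
    intro i hi
    unfold ascW
    by_cases hi1 : i + 1 ≤ m + 4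
    · rw [permVal_insP_gt _ _ _ _ (by omega) (by omega),
        permVal_insP_gt _ _ _ _ (by omega) (by omega),
        show i+1-1 = i-1+1 from by omega]
    · rw [permVal_zero _ _ (i+1) (by omega), permVal_zero (m+4) q (i-1+1) (by omega)]
      simp

noncomputable def remQ (n : ℕ) (p : Equiv.Perm (Fin (n+1))) : Equiv.Perm (Fin n) :=
  Equiv.ofBijective (fun j => (p ((p⁻¹ (Fin.last n)).succAbove j)).castPred (by
      intro h
      have : (p⁻¹ (Fin.last n)).succAbove j = p⁻¹ (Fin.last n) := by
        apply p.injective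
        rw [h]; simp
      exact Fin.succAbove_ne _ j this))
    ((Finite.injective_iff_bijective).mp (by
      intro x y h
      simp only at h
      have h2 := congrArg Fin.castSucc h
      rw [Fin.castSucc_castPred, Fin.castSucc_castPred] at h2
      exact Fin.succAbove_right_injective (p.injective h2)))

lemma insP_remQ (n : ℕ) (p : Equiv.Perm (Fin (n+1))) :
    insP n (remQ n p) (p⁻¹ (Fin.last n)) = p := by
  apply Equiv.ext
  intro i
  by_cases hi : i = p⁻¹ (Fin.last n)
  · rw [hi, insP_apply_same]
    simp
  · obtain ⟨j, rfl⟩ := Fin.exists_succAbove_eq hi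
    rw [insP_apply_succAbove]
    show Fin.castSucc ((remQ n p) j) = _
    unfold remQ
    rw [Equiv.ofBijective_apply]
    rw [Fin.castSucc_castPred]

lemma insP_inj (n : ℕ) (q q' : Equiv.Perm (Fin n)) (a a' : Fin (n+1))
    (h : insP n q a = insP n q' a') : q = q' ∧ a = a' := by
  have haa : a = a' := by
    by_contra hne
    obtain ⟨j, hj⟩ := Fin.exists_succAbove_eq hne
    have h1 : insP n q a a = Fin.last n := insP_apply_same n q a
    have h2 : insP n q' a' a = (q' j).castSucc := by
      conv_lhs => rw [← hj]
      rw [insP_apply_succAbove]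
    rw [h, h2] at h1
    exact Fin.ne_last_of_lt (Fin.castSucc_lt_last (q' j)) h1
  subst haa
  refine ⟨Equiv.ext fun j => ?_, rfl⟩
  have h1 : insP n q a (a.succAbove j) = (q j).castSucc := insP_apply_succAbove n q a j
  have h2 : insP n q' a (a.succAbove j) = (q' j).castSucc := insP_apply_succAbove n q' a j
  rw [h, h2] at h1
  exact Fin.castSucc_injective n h1.symm

lemma R_card_sum (m k : ℕ) :
    R (m+5) k = ∑ q : Equiv.Perm (Fin (m+4)),
      (Finset.univ.filter
        (fun a : Fin (m+5) => numRuns (m+5) (insP (m+4) q a) = k)).card := by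
  have step1 : R (m+5) k
      = (Finset.univ.filter (fun x : Equiv.Perm (Fin (m+4)) × Fin (m+5) =>
          numRuns (m+5) (insP (m+4) x.1 x.2) = k)).card := by
    unfold R
    symm
    apply Finset.card_bij (fun (x : Equiv.Perm (Fin (m+4)) × Fin (m+5)) _ => insP (m+4) x.1 x.2)
    · intro x hx
      simp only [Finset.mem_filter, Finset.mem_univ, true_and] at hx ⊢
      exact hx
    · intro x hx y hy hxy
      obtain ⟨h1, h2⟩ := insP_inj _ _ _ _ _ hxy
      exact Prod.ext h1 h2
    · intro p hp
      simp only [Finset.mem_filter, Finset.mem_univ, true_and] at hp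
      refine ⟨(remQ (m+4) p, p⁻¹ (Fin.last (m+4))), ?_, insP_remQ (m+4) p⟩
      simp only [Finset.mem_filter, Finset.mem_univ, true_and]
      rw [insP_remQ (m+4) p]
      exact hp
  rw [step1, Finset.card_filter]
  rw [Fintype.sum_prod_type]
  apply Finset.sum_congr rfl
  intro q _
  rw [Finset.card_filter]

lemma sum_ite_const {α : Type*} [Fintype α] (c : ℕ) (P : α → Prop) [DecidablePred P] :
    ∑ q : α, (if P q then c else 0) = c * (Finset.univ.filter P).card := by
  rw [← Finset.sum_filter, Finset.sum_const, smul_eq_mul, mul_comm]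

lemma Rrec (m k : ℕ) :
    R (m+5) k = k * R (m+4) k + 2 * R (m+4) (k-1) + (m+5-k) * R (m+4) (k-2) := by
  rw [R_card_sum m k]
  have inner : ∀ q : Equiv.Perm (Fin (m+4)),
      (Finset.univ.filter
        (fun a : Fin (m+5) => numRuns (m+5) (insP (m+4) q a) = k)).card
      = (if numRuns (m+4) q = k then k else 0)
        + (if numRuns (m+4) q + 1 = k then 2 else 0)
        + (if numRuns (m+4) q + 2 = k then m+5-k else 0) := by
    intro q
    rw [Finset.card_filter]
    have e1 : ∀ a : Fin (m+5),
        (if numRuns (m+5) (insP (m+4) q a) = k then 1 else 0)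
        = (fun i : ℕ => if numRuns (m+4) q + dlt (ascW (m+4) q) m i = k then 1 else 0)
            (a : ℕ) := by
      intro a
      simp only [numRuns_insP m q a]
    rw [Finset.sum_congr rfl (fun a _ => e1 a),
      Fin.sum_univ_eq_sum_range
        (fun i : ℕ => if numRuns (m+4) q + dlt (ascW (m+4) q) m i = k then 1 else 0) (m+5),
      ← Finset.card_filter]
    rw [dlt_card_k (ascW (m+4) q) m (numRuns (m+4) q) k (numRuns_eq_cnt (m+2) q)]
    have hj := numRuns_pos (m+4) q
    split_ifs <;> omega
  rw [Finset.sum_congr rfl (fun q _ => inner q), Finset.sum_add_distrib,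
    Finset.sum_add_distrib, sum_ite_const, sum_ite_const, sum_ite_const]
  have eA : k * (Finset.univ.filter (fun q : Equiv.Perm (Fin (m+4)) =>
      numRuns (m+4) q = k)).card = k * R (m+4) k := rfl
  have eB : 2 * (Finset.univ.filter (fun q : Equiv.Perm (Fin (m+4)) =>
      numRuns (m+4) q + 1 = k)).card = 2 * R (m+4) (k-1) := by
    rcases Nat.eq_zero_or_pos k with hk | hk
    · subst hk
      rw [Finset.filter_false_of_mem (fun q _ => by omega), Finset.card_empty, R_zero]
    · congr 1
      unfold R
      apply Finset.card_nbij id (fun q hq => by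
          simp only [Finset.mem_coe, Finset.mem_filter, Finset.mem_univ, true_and, id_eq] at *; omega)
        (Function.Injective.injOn (fun a b h => h))
      intro q hq
      simp only [Finset.coe_filter, Finset.mem_univ, true_and, Set.mem_setOf_eq,
        Set.mem_image] at *
      exact ⟨q, by omega, rfl⟩
  have eC : (m+5-k) * (Finset.univ.filter (fun q : Equiv.Perm (Fin (m+4)) =>
      numRuns (m+4) q + 2 = k)).card = (m+5-k) * R (m+4) (k-2) := by
    rcases Nat.lt_or_ge k 2 with hk | hk
    · rw [Finset.filter_false_of_mem (fun q _ => by omega), Finset.card_empty,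
        show k - 2 = 0 from by omega, R_zero]
    · congr 1
      unfold R
      apply Finset.card_nbij id (fun q hq => by
          simp only [Finset.mem_coe, Finset.mem_filter, Finset.mem_univ, true_and, id_eq] at *; omega)
        (Function.Injective.injOn (fun a b h => h))
      intro q hq
      simp only [Finset.coe_filter, Finset.mem_univ, true_and, Set.mem_setOf_eq,
        Set.mem_image] at *
      exact ⟨q, by omega, rfl⟩
  rw [eA, eB, eC]

open Polynomial in
lemma derivRpoly (m : ℕ) :
    derivative (Rpoly (m+4)) = ∑ k ∈ Finset.range (m+4),
      Polynomial.C ((R (m+4) k : ℤ) * k) * Polynomial.X ^ (k-1) := by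
  rw [Rpoly, map_sum]
  exact Finset.sum_congr rfl fun k _ => Polynomial.derivative_C_mul_X_pow _ _

open Polynomial in
lemma sumA (m : ℕ) :
    ∑ k ∈ Finset.range (m+5), Polynomial.C (((k * R (m+4) k : ℕ)) : ℤ) * Polynomial.X ^ k
    = Polynomial.X * derivative (Rpoly (m+4)) := by
  rw [derivRpoly, Finset.mul_sum, Finset.sum_range_succ]
  rw [R_big (m+2) (m+4) (by omega)]
  simp only [Nat.mul_zero, Nat.cast_zero, map_zero, zero_mul, add_zero]
  apply Finset.sum_congr rfl
  intro k _
  rcases k with _ | j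
  · simp
  · simp only [Nat.add_sub_cancel]
    push_cast
    simp only [map_add, map_mul, map_one, map_ofNat, map_natCast]
    ring

open Polynomial in
lemma sumB (m : ℕ) :
    ∑ k ∈ Finset.range (m+5), Polynomial.C (((2 * R (m+4) (k-1) : ℕ)) : ℤ) * Polynomial.X ^ k
    = 2 * Polynomial.X * Rpoly (m+4) := by
  rw [Finset.sum_range_succ', Rpoly, Finset.mul_sum]
  rw [show (0:ℕ)-1 = 0 from rfl, R_zero]
  simp only [Nat.mul_zero, Nat.cast_zero, map_zero, zero_mul, pow_zero, mul_one, add_zero]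
  apply Finset.sum_congr rfl
  intro j _
  simp only [Nat.add_sub_cancel]
  push_cast
  simp only [map_add, map_mul, map_one, map_ofNat, map_natCast]
  ring

open Polynomial in
lemma sumC (m : ℕ) :
    ∑ k ∈ Finset.range (m+5),
        Polynomial.C ((((m+5-k) * R (m+4) (k-2) : ℕ)) : ℤ) * Polynomial.X ^ k
    = ((m : Polynomial ℤ) + 3) * Polynomial.X^2 * Rpoly (m+4)
      - Polynomial.X^3 * derivative (Rpoly (m+4)) := by
  have hL : ∑ k ∈ Finset.range (m+5),
        Polynomial.C ((((m+5-k) * R (m+4) (k-2) : ℕ)) : ℤ) * Polynomial.X ^ k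
      = ∑ j ∈ Finset.range (m+3),
          Polynomial.C ((((m+3-j) * R (m+4) j : ℕ)) : ℤ) * Polynomial.X ^ (j+2) := by
    rw [Finset.sum_range_succ', Finset.sum_range_succ']
    rw [R_zero]
    simp only [Nat.mul_zero, Nat.cast_zero, map_zero, zero_mul, add_zero, mul_zero]
    apply Finset.sum_congr rfl
    intro j hj
    simp only [Finset.mem_range] at hj
    rw [show j+1+1-2 = j from by omega, show m+5-(j+1+1) = m+3-j from by omega]
  have hR : ((m : Polynomial ℤ) + 3) * Polynomial.X^2 * Rpoly (m+4)
        - Polynomial.X^3 * derivative (Rpoly (m+4))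
      = ∑ j ∈ Finset.range (m+3),
          Polynomial.C ((((m+3-j) * R (m+4) j : ℕ)) : ℤ) * Polynomial.X ^ (j+2) := by
    rw [derivRpoly, Rpoly, Finset.mul_sum, Finset.mul_sum, ← Finset.sum_sub_distrib,
      Finset.sum_range_succ]
    have elast : ((m:Polynomial ℤ)+3) * Polynomial.X^2
          * (Polynomial.C ((R (m+4) (m+3) : ℤ)) * Polynomial.X ^ (m+3))
        - Polynomial.X^3 * (Polynomial.C ((R (m+4) (m+3) : ℤ) * ((m+3 : ℕ) : ℤ))
          * Polynomial.X ^ (m+3-1)) = 0 := by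
      rw [show m+3-1 = m+2 from rfl]
      push_cast
      simp only [map_add, map_mul, map_one, map_ofNat, map_natCast]
      ring
    rw [elast, add_zero]
    apply Finset.sum_congr rfl
    intro j hj
    simp only [Finset.mem_range] at hj
    rcases j with _ | i
    · push_cast [Nat.zero_sub, Nat.sub_zero]
      simp only [map_add, map_mul, map_sub, map_one, map_zero, map_ofNat, map_natCast]
      ring
    · simp only [Nat.add_sub_cancel]
      rw [Nat.cast_mul, Nat.cast_sub (by omega : i+1 ≤ m+3)]
      push_cast
      simp only [map_add, map_mul, map_sub, map_one, map_ofNat, map_natCast]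
      ring
  rw [hL, hR]

open Polynomial in
lemma Rpoly_rec (m : ℕ) :
    Rpoly (m+5) = Polynomial.X * (1 - Polynomial.X^2) * derivative (Rpoly (m+4))
      + (2 * Polynomial.X + ((m : Polynomial ℤ) + 3) * Polynomial.X^2) * Rpoly (m+4) := by
  have expand : ∀ k ∈ Finset.range (m+5),
      Polynomial.C ((R (m+5) k : ℤ)) * Polynomial.X ^ k
      = Polynomial.C (((k * R (m+4) k : ℕ)) : ℤ) * Polynomial.X ^ k
        + Polynomial.C (((2 * R (m+4) (k-1) : ℕ)) : ℤ) * Polynomial.X ^ k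
        + Polynomial.C ((((m+5-k) * R (m+4) (k-2) : ℕ)) : ℤ) * Polynomial.X ^ k := by
    intro k _
    rw [Rrec m k]
    push_cast
    simp only [map_add, map_mul, map_one, map_ofNat, map_natCast]
    ring
  conv_lhs => rw [Rpoly]
  rw [Finset.sum_congr rfl expand, Finset.sum_add_distrib, Finset.sum_add_distrib,
    sumA, sumB, sumC]
  ring

open Polynomial in
lemma Rpoly_rec' (n : ℕ) (hn : 4 ≤ n) :
    Rpoly (n+1) = Polynomial.X * (1 - Polynomial.X^2) * derivative (Rpoly n)
      + (2 * Polynomial.X + ((n : Polynomial ℤ) - 1) * Polynomial.X^2) * Rpoly n := by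
  obtain ⟨m, rfl⟩ : ∃ m, n = m + 4 := ⟨n-4, by omega⟩
  rw [show ((m+4 : ℕ) : Polynomial ℤ) - 1 = (m : Polynomial ℤ) + 3 from by push_cast; ring]
  exact Rpoly_rec m

open Polynomial in
lemma dvd_deriv_step (j : ℕ) (f : Polynomial ℤ) (h : (Polynomial.X + 1)^j ∣ f) :
    (Polynomial.X + 1)^j ∣ (1 - Polynomial.X^2) * derivative f := by
  obtain ⟨S, rfl⟩ := h
  rcases j with _ | s
  · simp only [pow_zero]
    exact one_dvd _
  · refine ⟨(1 - Polynomial.X) * (Polynomial.C ((s:ℤ)+1) * S + (Polynomial.X + 1) * derivative S), ?_⟩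
    rw [derivative_mul, derivative_pow]
    simp only [derivative_add, derivative_X, derivative_one, add_zero, mul_one,
      Nat.add_sub_cancel, Nat.cast_add, Nat.cast_one]
    push_cast
    ring

open Polynomial in
lemma ES (n j : ℕ) (hn : 4 ≤ n) (h : (Polynomial.X + 1)^j ∣ Rpoly n) :
    (Polynomial.X + 1)^j ∣ Rpoly (n+1) := by
  rw [Rpoly_rec' n hn]
  apply dvd_add
  · rw [mul_assoc, show Polynomial.X * ((1 - Polynomial.X^2) * derivative (Rpoly n))
      = ((1 - Polynomial.X^2) * derivative (Rpoly n)) * Polynomial.X from mul_comm _ _]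
    exact Dvd.dvd.mul_right (dvd_deriv_step j (Rpoly n) h) _
  · exact Dvd.dvd.mul_left h _

open Polynomial in
lemma HS (s : ℕ) (S : Polynomial ℤ) (h : Rpoly (2*s+5) = (Polynomial.X + 1)^(s+1) * S) :
    (Polynomial.X + 1)^(s+2) ∣ Rpoly (2*s+6) := by
  refine ⟨Polynomial.X * (((s : Polynomial ℤ) + 3) * S + (1 - Polynomial.X) * derivative S), ?_⟩
  have hrec : Rpoly (2*s+6) = Polynomial.X * (1 - Polynomial.X^2) * derivative (Rpoly (2*s+5))
      + (2 * Polynomial.X + (((2*s+5 : ℕ) : Polynomial ℤ) - 1) * Polynomial.X^2) * Rpoly (2*s+5) :=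
    Rpoly_rec' (2*s+5) (by omega)
  rw [hrec, h, derivative_mul, derivative_pow]
  simp only [derivative_add, derivative_X, derivative_one, add_zero, mul_one,
    Nat.add_sub_cancel]
  push_cast
  simp only [map_add, map_mul, map_one, map_ofNat, map_natCast]
  ring

open Polynomial in
lemma base4 : (Polynomial.X + 1) ∣ Rpoly 4 := by
  have h0 : R 4 0 = 0 := R_zero 4
  have h1 : R 4 1 = 2 := by decide
  have h2 : R 4 2 = 12 := by decide
  have h3 : R 4 3 = 10 := by decide
  rw [show (Polynomial.X + 1 : Polynomial ℤ) = Polynomial.X - Polynomial.C (-1) from by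
    simp]
  rw [Polynomial.dvd_iff_isRoot]
  unfold Rpoly
  show Polynomial.eval (-1 : ℤ) _ = 0
  rw [Polynomial.eval_finset_sum]
  rw [Finset.sum_range_succ, Finset.sum_range_succ, Finset.sum_range_succ,
    Finset.sum_range_succ, Finset.sum_range_zero]
  simp [h0, h1, h2, h3]

open Polynomial in
lemma claim (s : ℕ) : ((Polynomial.X + 1)^(s+1) ∣ Rpoly (2*s+4))
    ∧ ((Polynomial.X + 1)^(s+1) ∣ Rpoly (2*s+5)) := by
  induction s with
  | zero =>
    constructor
    · simpa using base4
    · have h := ES 4 1 (by omega) (by simpa using base4)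
      simpa using h
  | succ s ih =>
    obtain ⟨S, hS⟩ := ih.2
    have h6 : (Polynomial.X + 1)^(s+2) ∣ Rpoly (2*s+6) := HS s S hS
    exact ⟨h6, ES (2*s+6) (s+2) (by omega) h6⟩

end Aux

/-- for `n ≥ 4`, the polynomial `R_n(x)` is divisible by `(x+1)^m`,
where `m = ⌊(n-2)/2⌋`. -/
theorem stmt3 (n : ℕ) (hn : 4 ≤ n) :
    (Polynomial.X + 1) ^ ((n - 2) / 2) ∣ Rpoly n := by
  obtain ⟨t, rfl⟩ : ∃ t, n = t + 4 := ⟨n-4, by omega⟩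
  rcases Nat.even_or_odd t with ⟨s, hs⟩ | ⟨s, hs⟩
  · subst hs
    rw [show (s + s + 4 - 2) / 2 = s + 1 from by omega]
    have := (claim s).1
    rw [show 2*s+4 = s+s+4 from by omega] at this
    exact this
  · subst hs
    rw [show (2*s+1 + 4 - 2) / 2 = s + 1 from by omega]
    have := (claim s).2
    rw [show 2*s+5 = 2*s+1+4 from by omega] at this
    exact this
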